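/- arXiv:1812.02571 — 3 statements merged into one kernel-verified Lean document; each statement's English description precedes it below -/
import Mathlib

section
/- Let f, f̃ : [0,∞) → ℝ be twice differentiable with f'' + f ≥ 1 and f̃'' + f̃ = 1, f(0) = f̃(0) ∈ [0,1), and f'(0) = f̃'(0). Let t₀ > 0 be such that 1 − f̃(t) ≥ 0 on [0, t₀]. Then f(t) ≥ f̃(t) for all t ∈ [0, t₀]. -/
open Real Set Filter Topology

theorem ode_comparison_spherical (f f' : ℝ → ℝ) (t₀ : ℝ) (ht₀ : 0 < t₀)
    (hf1 : ∀ t ≥ (0:ℝ), DifferentiableAt ℝ f t)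
    (hf2 : ∀ t ≥ (0:ℝ), DifferentiableAt ℝ (deriv f) t)
    (hf'1 : ∀ t ≥ (0:ℝ), DifferentiableAt ℝ f' t)
    (hf'2 : ∀ t ≥ (0:ℝ), DifferentiableAt ℝ (deriv f') t)
    (hineq : ∀ t ≥ (0:ℝ), 1 ≤ deriv (deriv f) t + f t)
    (heq : ∀ t ≥ (0:ℝ), deriv (deriv f') t + f' t = 1)
    (h0 : f 0 = f' 0) (h0mem : f 0 ∈ Set.Ico (0:ℝ) 1)
    (h0' : deriv f 0 = deriv f' 0)
    (hpos : ∀ t ∈ Set.Icc (0:ℝ) t₀, 0 ≤ 1 - f' t) :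
    ∀ t ∈ Set.Icc (0:ℝ) t₀, f' t ≤ f t := by
  set g : ℝ → ℝ := fun t => f t - f' t with hgdef
  set dg : ℝ → ℝ := fun t => deriv f t - deriv f' t with hdgdef
  have hg0 : g 0 = 0 := by simp [hgdef, h0]
  have hdg0 : dg 0 = 0 := by simp [hdgdef, h0']
  have hgd : ∀ t ≥ (0:ℝ), HasDerivAt g (dg t) t := fun t ht =>
    (hf1 t ht).hasDerivAt.sub (hf'1 t ht).hasDerivAt
  have hdgd : ∀ t ≥ (0:ℝ),
      HasDerivAt dg (deriv (deriv f) t - deriv (deriv f') t) t := fun t ht =>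
    (hf2 t ht).hasDerivAt.sub (hf'2 t ht).hasDerivAt
  have hsum : ∀ t ≥ (0:ℝ), 0 ≤ (deriv (deriv f) t - deriv (deriv f') t) + g t := by
    intro t ht
    have h1 := hineq t ht
    have h2 := heq t ht
    simp only [hgdef]
    nlinarith
  -- Step 1 : t₀ < π
  have htpi : t₀ < π := by
    by_contra hle
    push_neg at hle
    set U : ℝ → ℝ := fun t => (-(deriv f' t)) * Real.sin t - (1 - f' t) * Real.cos t with hU
    have hUd : ∀ t ≥ (0:ℝ), HasDerivAt U 0 t := by
      intro t ht
      have ha : HasDerivAt (fun s => -(deriv f' s)) (-(deriv (deriv f') t)) t :=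
        (hf'2 t ht).hasDerivAt.neg
      have hb : HasDerivAt (fun s => 1 - f' s) (-(deriv f' t)) t := by
        simpa using (hf'1 t ht).hasDerivAt.const_sub 1
      have hder := (ha.mul (Real.hasDerivAt_sin t)).sub (hb.mul (Real.hasDerivAt_cos t))
      refine hder.congr_deriv ?_
      have h2 : deriv (deriv f') t = 1 - f' t := by linarith [heq t ht]
      rw [h2]; ring
    have hUcont : ContinuousOn U (Icc 0 π) := by
      intro x hx
      exact (((hf'2 x hx.1).continuousAt.neg.mul Real.continuous_sin.continuousAt).sub
        ((continuousAt_const.sub (hf'1 x hx.1).continuousAt).mul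
          Real.continuous_cos.continuousAt)).continuousWithinAt
    have hmono : MonotoneOn U (Icc 0 π) := by
      apply monotoneOn_of_deriv_nonneg (convex_Icc 0 π) hUcont
      · intro x hx
        rw [interior_Icc] at hx
        exact (hUd x hx.1.le).differentiableAt.differentiableWithinAt
      · intro x hx
        rw [interior_Icc] at hx
        rw [(hUd x hx.1.le).deriv]
    have hanti : AntitoneOn U (Icc 0 π) := by
      apply antitoneOn_of_deriv_nonpos (convex_Icc 0 π) hUcont
      · intro x hx
        rw [interior_Icc] at hx
        exact (hUd x hx.1.le).differentiableAt.differentiableWithinAt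
      · intro x hx
        rw [interior_Icc] at hx
        rw [(hUd x hx.1.le).deriv]
    have h0mem' : (0:ℝ) ∈ Icc (0:ℝ) π := ⟨le_refl 0, Real.pi_pos.le⟩
    have hpimem : π ∈ Icc (0:ℝ) π := ⟨Real.pi_pos.le, le_refl π⟩
    have e1 : U π ≤ U 0 := hanti h0mem' hpimem Real.pi_pos.le
    have hU0 : U 0 = -(1 - f 0) := by simp [hU, h0]
    have hUpi : U π = 1 - f' π := by simp [hU]
    have hfpipos := hpos π ⟨Real.pi_pos.le, hle⟩
    have hf0lt : f 0 < 1 := h0mem.2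
    rw [hU0, hUpi] at e1
    linarith
  -- Step 2 : the Wronskian W = dg·sin − g·cos is nonnegative on [0, t₀]
  set W : ℝ → ℝ := fun t => dg t * Real.sin t - g t * Real.cos t with hW
  have hWd : ∀ t ≥ (0:ℝ),
      HasDerivAt W (((deriv (deriv f) t - deriv (deriv f') t) + g t) * Real.sin t) t := by
    intro t ht
    have hder := ((hdgd t ht).mul (Real.hasDerivAt_sin t)).sub
      ((hgd t ht).mul (Real.hasDerivAt_cos t))
    refine hder.congr_deriv ?_
    ring
  have hWcont : ContinuousOn W (Icc 0 t₀) := by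
    intro x hx
    exact ((((hf2 x hx.1).sub (hf'2 x hx.1)).continuousAt.mul
      Real.continuous_sin.continuousAt).sub
      (((hf1 x hx.1).sub (hf'1 x hx.1)).continuousAt.mul
        Real.continuous_cos.continuousAt)).continuousWithinAt
  have hWmono : MonotoneOn W (Icc 0 t₀) := by
    apply monotoneOn_of_deriv_nonneg (convex_Icc 0 t₀) hWcont
    · intro x hx
      rw [interior_Icc] at hx
      exact (hWd x hx.1.le).differentiableAt.differentiableWithinAt
    · intro x hx
      rw [interior_Icc] at hx
      rw [(hWd x hx.1.le).deriv]
      have hsin : 0 ≤ Real.sin x :=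
        (Real.sin_pos_of_pos_of_lt_pi hx.1 (lt_trans hx.2 htpi)).le
      exact mul_nonneg (hsum x hx.1.le) hsin
  have hW0 : W 0 = 0 := by simp [hW, hg0, hdg0]
  have hWnonneg : ∀ t ∈ Icc (0:ℝ) t₀, 0 ≤ W t := by
    intro t ht
    have := hWmono ⟨le_refl 0, ht₀.le⟩ ht ht.1
    rwa [hW0] at this
  -- Step 3 : g / sin is monotone on (0, t₀]
  set r : ℝ → ℝ := fun t => g t / Real.sin t with hr
  have hsinpos : ∀ t ∈ Ioc (0:ℝ) t₀, 0 < Real.sin t := fun t ht =>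
    Real.sin_pos_of_pos_of_lt_pi ht.1 (lt_of_le_of_lt ht.2 htpi)
  have hrd : ∀ t ∈ Ioo (0:ℝ) t₀,
      HasDerivAt r (W t / Real.sin t ^ 2) t := by
    intro t ht
    have hsne : Real.sin t ≠ 0 := (hsinpos t ⟨ht.1, ht.2.le⟩).ne'
    have := (hgd t ht.1.le).div (Real.hasDerivAt_sin t) hsne
    exact this
  have hrcont : ContinuousOn r (Ioc 0 t₀) := by
    intro x hx
    exact (((hf1 x hx.1.le).sub (hf'1 x hx.1.le)).continuousAt.div
      Real.continuous_sin.continuousAt (hsinpos x hx).ne').continuousWithinAt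
  have hrmono : MonotoneOn r (Ioc 0 t₀) := by
    apply monotoneOn_of_deriv_nonneg (convex_Ioc 0 t₀) hrcont
    · intro x hx
      rw [interior_Ioc] at hx
      exact (hrd x hx).differentiableAt.differentiableWithinAt
    · intro x hx
      rw [interior_Ioc] at hx
      rw [(hrd x hx).deriv]
      exact div_nonneg (hWnonneg x ⟨hx.1.le, hx.2.le⟩) (sq_nonneg _)
  -- Step 4 : r tends to 0 at 0⁺
  have hslope : Tendsto (fun s => g s / s) (𝓝[≠] (0:ℝ)) (𝓝 0) := by
    have := hasDerivAt_iff_tendsto_slope.mp (hgd 0 (le_refl 0))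
    rw [hdg0] at this
    refine this.congr (fun s => ?_)
    simp [slope_def_field, hg0, div_eq_inv_mul]
  have hsinslope : Tendsto (fun s => Real.sin s / s) (𝓝[≠] (0:ℝ)) (𝓝 1) := by
    have := hasDerivAt_iff_tendsto_slope.mp (Real.hasDerivAt_sin 0)
    rw [Real.cos_zero] at this
    refine this.congr (fun s => ?_)
    simp [slope_def_field, div_eq_inv_mul]
  have htend0 : Tendsto r (𝓝[≠] (0:ℝ)) (𝓝 0) := by
    have h2 : Tendsto (fun s => (Real.sin s / s)⁻¹) (𝓝[≠] (0:ℝ)) (𝓝 1) := by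
      simpa using hsinslope.inv₀ one_ne_zero
    have h3 := hslope.mul h2
    rw [zero_mul] at h3
    · refine h3.congr' ?_
      filter_upwards [self_mem_nhdsWithin] with s hs
      have hs0 : s ≠ 0 := hs
      rw [inv_div, mul_div_assoc', div_mul_cancel₀ _ hs0]
  have htend : Tendsto r (𝓝[>] (0:ℝ)) (𝓝 0) :=
    htend0.mono_left (nhdsWithin_mono 0 (fun x hx => ne_of_gt hx))
  -- Conclusion
  intro t ht
  rcases eq_or_lt_of_le ht.1 with h | h
  · rw [← h, ← h0]
  · have hgt : 0 ≤ g t := by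
      have hkey : ∀ᶠ s in 𝓝[>] (0:ℝ), r s ≤ r t := by
        filter_upwards [Ioo_mem_nhdsGT_of_mem (show (0:ℝ) ∈ Ico (0:ℝ) t from ⟨le_refl 0, h⟩)]
          with s hs
        exact hrmono ⟨hs.1, le_trans hs.2.le ht.2⟩ ⟨h, ht.2⟩ hs.2.le
      have h0le : (0:ℝ) ≤ r t := le_of_tendsto htend hkey
      have hst : 0 < Real.sin t := hsinpos t ⟨h, ht.2⟩
      have := mul_nonneg h0le hst.le
      rwa [hr, div_mul_cancel₀ _ hst.ne'] at this
    simpa [hgdef, sub_nonneg] using hgt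
end

section
/- Let A ≥ 0 and a ∈ [0, arccot A]. If arccos(A/(A·cos a + sin a)) = arccot A (with arccot 0 = π/2, and assuming A·cos a + sin a > 0), then a = arccot A or A = 0. -/
theorem equality_analysis_spherical (A ℓ a : ℝ) (hA : 0 ≤ A)
    (hℓ : ℓ ∈ Set.Ioc 0 (Real.pi / 2)) (hcot : Real.cos ℓ / Real.sin ℓ = A)
    (ha : a ∈ Set.Icc 0 ℓ)
    (hden : 0 < A * Real.cos a + Real.sin a)
    (h : Real.arccos (A / (A * Real.cos a + Real.sin a)) = ℓ) :
    a = ℓ ∨ A = 0 := by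
  obtain ⟨hℓ0, hℓπ⟩ := hℓ
  obtain ⟨ha0, haℓ⟩ := ha
  have hsin : 0 < Real.sin ℓ := Real.sin_pos_of_pos_of_lt_pi hℓ0
    (lt_of_le_of_lt hℓπ (by linarith [Real.pi_pos]))
  have hcosℓ : 0 ≤ Real.cos ℓ := Real.cos_nonneg_of_mem_Icc
    ⟨by linarith [Real.pi_pos], hℓπ⟩
  rcases eq_or_lt_of_le hcosℓ with hc0 | hcpos
  · right
    rw [← hcot, ← hc0, zero_div]
  set x := A / (A * Real.cos a + Real.sin a) with hx
  have hx0 : 0 ≤ x := div_nonneg hA hden.le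
  have hx1 : x ≤ 1 := by
    by_contra hgt
    push_neg at hgt
    have : Real.arccos x = 0 := Real.arccos_eq_zero.mpr hgt.le
    rw [h] at this
    exact absurd this hℓ0.ne'
  have hxcos : x = Real.cos ℓ := by
    rw [← h, Real.cos_arccos (by linarith) hx1]
  have hA' : A = Real.cos ℓ * (A * Real.cos a + Real.sin a) := by
    rw [hx, div_eq_iff hden.ne'] at hxcos
    linarith [hxcos]
  have hAeq : Real.cos ℓ = A * Real.sin ℓ := by
    field_simp at hcot
    linarith [hcot]
  have e1 : Real.cos ℓ * (Real.cos ℓ * Real.cos a + Real.sin ℓ * Real.sin a)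
      = Real.cos ℓ * 1 := by
    linear_combination (-Real.sin ℓ) * hA' + (Real.cos ℓ * Real.cos a - 1) * hAeq
  have key : Real.cos (ℓ - a) = 1 := by
    rw [Real.cos_sub]
    exact mul_left_cancel₀ hcpos.ne' e1
  left
  have h1 : ℓ - a = 0 := Real.injOn_cos
    (Set.mem_Icc.mpr ⟨by linarith, by linarith [Real.pi_pos]⟩)
    (Set.mem_Icc.mpr ⟨le_refl 0, Real.pi_pos.le⟩)
    (by rw [key, Real.cos_zero])
  linarith
end

section
/- Let ℓ ∈ (0, π/2], a ∈ [0, ℓ], c ∈ [0, 1], b > 0, and let f : [0, b] → ℝ be twice differentiable with f'' + f ≥ 1, f(0) = 1 − cos(ℓ − a), f'(0) = sin(ℓ − a)·c, and f(b) = 1 − cos ℓ. Suppose moreover 1 − f̃ ≥ 0 on [0, b] where f̃(t) = 1 − cos(ℓ − a)cos t + sin(ℓ − a)sin t·c. Then cos ℓ ≤ cos(ℓ − a)·cos b − sin(ℓ − a)·sin b·c ≤ cos(ℓ − a)·cos b. -/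
open Real Set Filter Topology

/-- ODE comparison core: if `f'' + f ≥ 1` on `[0,b]` with `0 < b ≤ π/2`,
`f 0 = 1 - A`, `f' 0 = B`, then `f b ≥ 1 - A cos b + B sin b`. -/
lemma spherical_core_comp (f : ℝ → ℝ) (A B b : ℝ) (hb : 0 < b) (hbπ : b ≤ Real.pi / 2)
    (hd1 : ∀ t ∈ Set.Icc 0 b, DifferentiableAt ℝ f t)
    (hd2 : ∀ t ∈ Set.Icc 0 b, DifferentiableAt ℝ (deriv f) t)
    (hineq : ∀ t ∈ Set.Icc 0 b, 1 ≤ deriv (deriv f) t + f t)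
    (h0 : f 0 = 1 - A) (h0' : deriv f 0 = B) :
    1 - A * Real.cos b + B * Real.sin b ≤ f b := by
  have hπ := Real.pi_pos
  set g : ℝ → ℝ := fun t => f t - (1 - A * Real.cos t + B * Real.sin t) with hg_def
  set g1 : ℝ → ℝ := fun t => deriv f t - (A * Real.sin t + B * Real.cos t) with hg1_def
  set g2 : ℝ → ℝ := fun t => deriv (deriv f) t - (A * Real.cos t - B * Real.sin t) with hg2_def
  have hsm1 : ∀ t : ℝ, HasDerivAt (fun s => 1 - A * Real.cos s + B * Real.sin s)
      (A * Real.sin t + B * Real.cos t) t := by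
    intro t
    have h1 := ((Real.hasDerivAt_cos t).const_mul A)
    have h2 := ((Real.hasDerivAt_sin t).const_mul B)
    have := ((hasDerivAt_const t (1:ℝ)).sub h1).add h2
    exact this.congr_deriv (by ring)
  have hsm2 : ∀ t : ℝ, HasDerivAt (fun s => A * Real.sin s + B * Real.cos s)
      (A * Real.cos t - B * Real.sin t) t := by
    intro t
    have h1 := ((Real.hasDerivAt_sin t).const_mul A)
    have h2 := ((Real.hasDerivAt_cos t).const_mul B)
    have := h1.add h2
    exact this.congr_deriv (by ring)
  have hg : ∀ t ∈ Set.Icc 0 b, HasDerivAt g (g1 t) t := fun t ht =>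
    ((hd1 t ht).hasDerivAt).sub (hsm1 t)
  have hg1 : ∀ t ∈ Set.Icc 0 b, HasDerivAt g1 (g2 t) t := fun t ht =>
    ((hd2 t ht).hasDerivAt).sub (hsm2 t)
  set w : ℝ → ℝ := fun t => g1 t * Real.sin t - g t * Real.cos t with hw_def
  have hw : ∀ t ∈ Set.Icc 0 b, HasDerivAt w ((g2 t + g t) * Real.sin t) t := by
    intro t ht
    have h1 := ((hg1 t ht).mul (Real.hasDerivAt_sin t)).sub
      ((hg t ht).mul (Real.hasDerivAt_cos t))
    exact h1.congr_deriv (by ring)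
  have hsum : ∀ t ∈ Set.Icc 0 b, 0 ≤ (g2 t + g t) * Real.sin t := by
    intro t ht
    have h1 : 0 ≤ g2 t + g t := by
      have := hineq t ht
      simp only [hg2_def, hg_def]
      nlinarith [Real.sin_sq_add_cos_sq t]
    have h2 : 0 ≤ Real.sin t := Real.sin_nonneg_of_nonneg_of_le_pi ht.1
      (le_trans ht.2 (by linarith))
    positivity
  have hg0 : g 0 = 0 := by simp [hg_def, h0]
  have hg10 : g1 0 = 0 := by simp [hg1_def, h0']
  -- w is monotone on [0,b], w 0 = 0, so w ≥ 0
  have hwmono : MonotoneOn w (Set.Icc 0 b) := by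
    apply monotoneOn_of_deriv_nonneg (convex_Icc 0 b)
    · exact fun t ht => ((hw t ht).continuousAt).continuousWithinAt
    · intro t ht
      rw [interior_Icc] at ht
      exact ((hw t (Set.Ioo_subset_Icc_self ht)).differentiableAt).differentiableWithinAt
    · intro t ht
      rw [interior_Icc] at ht
      rw [(hw t (Set.Ioo_subset_Icc_self ht)).deriv]
      exact hsum t (Set.Ioo_subset_Icc_self ht)
  have hw0 : w 0 = 0 := by simp [hw_def, hg0, hg10]
  have hwnn : ∀ t ∈ Set.Icc 0 b, 0 ≤ w t := by
    intro t ht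
    have := hwmono (Set.left_mem_Icc.2 hb.le) ht ht.1
    linarith [hw0 ▸ this]
  -- q = g / sin is monotone on (0,b]
  set q : ℝ → ℝ := fun t => g t / Real.sin t with hq_def
  have hsinpos : ∀ t ∈ Set.Ioc 0 b, 0 < Real.sin t := fun t ht =>
    Real.sin_pos_of_pos_of_lt_pi ht.1 (lt_of_le_of_lt (ht.2.trans hbπ) (by linarith))
  have hqd : ∀ t ∈ Set.Ioc 0 b, HasDerivAt q (w t / (Real.sin t)^2) t := by
    intro t ht
    have hne : Real.sin t ≠ 0 := (hsinpos t ht).ne'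
    have := (hg t ⟨ht.1.le, ht.2⟩).div (Real.hasDerivAt_sin t) hne
    exact this
  have hqmono : MonotoneOn q (Set.Ioc 0 b) := by
    apply monotoneOn_of_deriv_nonneg (convex_Ioc 0 b)
    · exact fun t ht => ((hqd t ht).continuousAt).continuousWithinAt
    · intro t ht
      rw [interior_Ioc] at ht
      exact ((hqd t (Set.Ioo_subset_Ioc_self ht)).differentiableAt).differentiableWithinAt
    · intro t ht
      rw [interior_Ioc] at ht
      have ht' := Set.Ioo_subset_Ioc_self ht
      rw [(hqd t ht').deriv]
      have := hwnn t ⟨ht'.1.le, ht'.2⟩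
      positivity
  -- limit of q at 0⁺ is 0
  have hlim : Tendsto q (𝓝[>] (0:ℝ)) (𝓝 0) := by
    have hgd0 : HasDerivAt g 0 0 := by
      have := hg 0 (Set.left_mem_Icc.2 hb.le)
      rwa [hg10] at this
    have hslopeg : Tendsto (slope g 0) (𝓝[≠] (0:ℝ)) (𝓝 0) :=
      hasDerivAt_iff_tendsto_slope.1 hgd0
    have hslopes : Tendsto (slope Real.sin 0) (𝓝[≠] (0:ℝ)) (𝓝 1) := by
      have := hasDerivAt_iff_tendsto_slope.1 (Real.hasDerivAt_sin 0)
      simpa using this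
    have hdiv : Tendsto (fun t => slope g 0 t / slope Real.sin 0 t) (𝓝[≠] (0:ℝ)) (𝓝 0) := by
      have := hslopeg.div hslopes one_ne_zero
      simp only [zero_div] at this
      exact this
    have hmono : 𝓝[>] (0:ℝ) ≤ 𝓝[≠] (0:ℝ) :=
      nhdsWithin_mono 0 (fun x hx => ne_of_gt hx)
    have h2 := hdiv.mono_left hmono
    apply h2.congr'
    filter_upwards [self_mem_nhdsWithin] with t (ht : 0 < t)
    have htne : t ≠ 0 := ht.ne'
    simp only [slope_def_field, hq_def, hg0, Real.sin_zero, sub_zero]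
    rcases eq_or_ne (Real.sin t) 0 with hs | hs
    · simp [hs]
    · field_simp
  have hev : ∀ᶠ t in 𝓝[>] (0:ℝ), q t ≤ q b := by
    filter_upwards [Ioc_mem_nhdsGT_of_mem ⟨le_refl 0, hb⟩] with t ht
    exact hqmono ht (Set.right_mem_Ioc.2 hb) ht.2
  have hqb : 0 ≤ q b := le_of_tendsto hlim hev
  have hsb : 0 < Real.sin b := hsinpos b (Set.right_mem_Ioc.2 hb)
  have hgb : 0 ≤ g b := by
    by_contra h
    push_neg at h
    have : q b < 0 := div_neg_of_neg_of_pos h hsb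
    linarith
  simp only [hg_def] at hgb
  linarith

theorem spherical_core (f : ℝ → ℝ) (ℓ a c b : ℝ)
    (hℓ : ℓ ∈ Set.Ioc 0 (Real.pi / 2)) (ha : a ∈ Set.Icc 0 ℓ)
    (hc : c ∈ Set.Icc (0:ℝ) 1) (hb : 0 < b)
    (hd1 : ∀ t ∈ Set.Icc 0 b, DifferentiableAt ℝ f t)
    (hd2 : ∀ t ∈ Set.Icc 0 b, DifferentiableAt ℝ (deriv f) t)
    (hineq : ∀ t ∈ Set.Icc 0 b, 1 ≤ deriv (deriv f) t + f t)
    (h0 : f 0 = 1 - Real.cos (ℓ - a))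
    (h0' : deriv f 0 = Real.sin (ℓ - a) * c)
    (hfb : f b = 1 - Real.cos ℓ)
    (hpos : ∀ t ∈ Set.Icc 0 b,
      0 ≤ 1 - (1 - Real.cos (ℓ - a) * Real.cos t + Real.sin (ℓ - a) * Real.sin t * c)) :
    Real.cos ℓ ≤ Real.cos (ℓ - a) * Real.cos b - Real.sin (ℓ - a) * Real.sin b * c
    ∧ Real.cos (ℓ - a) * Real.cos b - Real.sin (ℓ - a) * Real.sin b * c
        ≤ Real.cos (ℓ - a) * Real.cos b := by
  have hπ := Real.pi_pos
  obtain ⟨hℓ0, hℓπ⟩ := hℓ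
  obtain ⟨ha0, haℓ⟩ := ha
  obtain ⟨hc0, hc1⟩ := hc
  have hla0 : 0 ≤ ℓ - a := by linarith
  have hla2 : ℓ - a ≤ Real.pi / 2 := by linarith
  have hsinla : 0 ≤ Real.sin (ℓ - a) :=
    Real.sin_nonneg_of_nonneg_of_le_pi hla0 (by linarith)
  have hA : 0 ≤ Real.cos (ℓ - a) :=
    Real.cos_nonneg_of_mem_Icc ⟨by linarith, hla2⟩
  rcases eq_or_lt_of_le hA with hA0 | hApos
  · -- cos (ℓ - a) = 0 : forces ℓ = π/2, a = 0, c = 0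
    have hla : ℓ - a = Real.pi / 2 := by
      by_contra h
      have hlt : ℓ - a < Real.pi / 2 := lt_of_le_of_ne hla2 h
      have : 0 < Real.cos (ℓ - a) :=
        Real.cos_pos_of_mem_Ioo ⟨by linarith, hlt⟩
      linarith [hA0.symm ▸ this]
    have haz : a = 0 := by linarith
    have hlz : ℓ = Real.pi / 2 := by linarith
    have hc0' : c = 0 := by
      set t0 : ℝ := min b 1 with ht0
      have ht0pos : 0 < t0 := lt_min hb one_pos
      have ht0b : t0 ∈ Set.Icc 0 b := ⟨ht0pos.le, min_le_left _ _⟩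
      have hst0 : 0 < Real.sin t0 :=
        Real.sin_pos_of_pos_of_lt_pi ht0pos
          (lt_of_le_of_lt (min_le_right _ _) (by linarith [Real.pi_gt_three]))
      have := hpos t0 ht0b
      rw [← hA0] at this
      have hs1 : Real.sin (ℓ - a) = 1 := by rw [hla, Real.sin_pi_div_two]
      rw [hs1] at this
      nlinarith
    rw [← hA0, hc0', hlz]
    simp
  · -- cos (ℓ - a) > 0 : show b ≤ π/2
    have hB : 0 ≤ Real.sin (ℓ - a) * c := mul_nonneg hsinla hc0
    have hbπ : b ≤ Real.pi / 2 := by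
      by_contra h
      push_neg at h
      have hhalf : Real.pi / 2 ∈ Set.Icc 0 b := ⟨by linarith, h.le⟩
      have h1 := hpos _ hhalf
      rw [Real.cos_pi_div_two, Real.sin_pi_div_two] at h1
      have hBz : Real.sin (ℓ - a) * c = 0 := le_antisymm (by linarith) hB
      set t1 : ℝ := min b Real.pi with ht1
      have ht1b : t1 ∈ Set.Icc 0 b := ⟨le_min hb.le hπ.le, min_le_left _ _⟩
      have ht1gt : Real.pi / 2 < t1 := lt_min h (by linarith)
      have ht1lt : t1 < Real.pi + Real.pi / 2 := lt_of_le_of_lt (min_le_right _ _) (by linarith)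
      have hct1 : Real.cos t1 < 0 := Real.cos_neg_of_pi_div_two_lt_of_lt ht1gt ht1lt
      have h2 := hpos t1 ht1b
      have hst1 : 0 ≤ Real.sin (ℓ - a) * Real.sin t1 * c := by
        rw [mul_comm (Real.sin (ℓ - a)) (Real.sin t1), mul_assoc, hBz, mul_zero]
      nlinarith
    have hmain := spherical_core_comp f (Real.cos (ℓ - a)) (Real.sin (ℓ - a) * c) b hb hbπ
      hd1 hd2 hineq h0 h0'
    rw [hfb] at hmain
    have hsb : 0 ≤ Real.sin b :=
      Real.sin_nonneg_of_nonneg_of_le_pi hb.le (by linarith)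
    constructor
    · linarith
    · have : 0 ≤ Real.sin (ℓ - a) * Real.sin b * c := by
        rw [mul_comm (Real.sin (ℓ - a)) (Real.sin b), mul_assoc]
        exact mul_nonneg hsb hB
      linarith
end
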